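/- Let w₁, w₂, … be independent identically distributed, strictly positive, integrable real random variables such that log((w₁ + ⋯ + w_K)/K) is integrable for every K ≥ 1. Define the importance-weighted estimator L_K := E[log((w₁ + ⋯ + w_K)/K)]. Then L_K is monotonically non-decreasing in K, i.e., L_K ≤ L_{K+1} for every K ≥ 1, and L_K ≤ log E[w₁] for every K ≥ 1. (Monotone tightening of the importance-weighted autoencoder (IWAE) bound.) -/

import Mathlib

open MeasureTheory ProbabilityTheory Finset

section helpers
variable {Ω : Type*} {mΩ : MeasurableSpace Ω} {P : Measure Ω} [IsProbabilityMeasure P]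

/-- iIndepFun is stable under a.e. modification. -/
lemma iwae_iIndepFun_congr {w W : ℕ → Ω → ℝ}
    (h : iIndepFun w P)
    (hae : ∀ i, w i =ᵐ[P] W i) :
    iIndepFun W P := by
  rw [iIndepFun_iff_measure_inter_preimage_eq_mul] at h ⊢
  intro S sets hsets
  have hset : ∀ i : ℕ, (W i ⁻¹' sets i : Set Ω) =ᵐ[P] (w i ⁻¹' sets i : Set Ω) := by
    intro i
    filter_upwards [hae i] with ω hω
    show (W i ω ∈ sets i) = (w i ω ∈ sets i)
    rw [hω]
  have h1 : P (⋂ i ∈ S, W i ⁻¹' sets i) = P (⋂ i ∈ S, w i ⁻¹' sets i) := by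
    apply measure_congr
    have : ∀ᵐ ω ∂P, ∀ i ∈ S, w i ω = W i ω := by
      have := (ae_ball_iff S.countable_toSet).2 (fun i (_ : i ∈ (S : Set ℕ)) => hae i)
      filter_upwards [this] with ω hω i hi
      exact hω i hi
    filter_upwards [this] with ω hω
    show (ω ∈ ⋂ i ∈ S, W i ⁻¹' sets i) = (ω ∈ ⋂ i ∈ S, w i ⁻¹' sets i)
    simp only [Set.mem_iInter, Set.mem_preimage, eq_iff_iff]
    exact ⟨fun hmem i hi => by rw [hω i hi]; exact hmem i hi,
           fun hmem i hi => by rw [← hω i hi]; exact hmem i hi⟩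
  rw [h1, h S hsets]
  exact Finset.prod_congr rfl fun i hi => (measure_congr (hset i)).symm ▸ rfl

/-- sum of independent identically distributed pairs. -/
lemma iwae_identDistrib_add {X Y X' Y' : Ω → ℝ}
    (hXY : IndepFun X Y P) (hXY' : IndepFun X' Y' P)
    (hX : IdentDistrib X X' P P) (hY : IdentDistrib Y Y' P P) :
    IdentDistrib (fun ω => X ω + Y ω) (fun ω => X' ω + Y' ω) P P := by
  have hXm := hX.aemeasurable_fst
  have hYm := hY.aemeasurable_fst
  have hXm' := hX.aemeasurable_snd
  have hYm' := hY.aemeasurable_snd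
  have hadd : Measurable (fun p : ℝ × ℝ => p.1 + p.2) := measurable_fst.add measurable_snd
  refine ⟨hXm.add hYm, hXm'.add hYm', ?_⟩
  have e1 : P.map (fun ω => X ω + Y ω)
      = (P.map (fun ω => (X ω, Y ω))).map (fun p : ℝ × ℝ => p.1 + p.2) :=
    (AEMeasurable.map_map_of_aemeasurable hadd.aemeasurable (hXm.prodMk hYm)).symm
  have e1' : P.map (fun ω => X' ω + Y' ω)
      = (P.map (fun ω => (X' ω, Y' ω))).map (fun p : ℝ × ℝ => p.1 + p.2) :=
    (AEMeasurable.map_map_of_aemeasurable hadd.aemeasurable (hXm'.prodMk hYm')).symm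
  rw [e1, e1', (indepFun_iff_map_prod_eq_prod_map_map hXm hYm).mp hXY,
    (indepFun_iff_map_prod_eq_prod_map_map hXm' hYm').mp hXY', hX.map_eq, hY.map_eq]

end helpers

section helpers2
variable {Ω : Type*} {mΩ : MeasurableSpace Ω} {P : Measure Ω} [IsProbabilityMeasure P]

/-- Any finset-sum of iid variables has the distribution of the initial-segment sum of
the same cardinality. -/
lemma iwae_sum_identDistrib {W : ℕ → Ω → ℝ}
    (hindep : iIndepFun W P)
    (hmeas : ∀ i, Measurable (W i))
    (hident : ∀ i, IdentDistrib (W i) (W 0) P P) (s : Finset ℕ) :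
    IdentDistrib (fun ω => ∑ i ∈ s, W i ω) (fun ω => ∑ i ∈ range s.card, W i ω) P P := by
  classical
  induction s using Finset.induction_on with
  | empty => simp only [sum_empty, card_empty, range_zero]
             exact IdentDistrib.refl aemeasurable_const
  | insert a s ha ih =>
    rw [Finset.card_insert_of_notMem ha]
    have h1 : IndepFun (W a) (fun ω => ∑ i ∈ s, W i ω) P := by
      have := (hindep.indepFun_finsetSum_of_notMem hmeas ha).symm
      convert this using 1
      ext ω; simp [Finset.sum_apply]
    have h2 : IndepFun (W s.card) (fun ω => ∑ i ∈ range s.card, W i ω) P := by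
      have := (hindep.indepFun_sum_range_succ hmeas s.card).symm
      convert this using 1
      ext ω; simp [Finset.sum_apply]
    have h3 : IdentDistrib (W a) (W s.card) P P := (hident a).trans (hident s.card).symm
    have h4 := iwae_identDistrib_add h1 h2 h3 ih
    have e1 : (fun ω => W a ω + ∑ i ∈ s, W i ω) = fun ω => ∑ i ∈ insert a s, W i ω := by
      ext ω; rw [Finset.sum_insert ha]
    have e2 : (fun ω => W s.card ω + ∑ i ∈ range s.card, W i ω)
        = fun ω => ∑ i ∈ range (s.card + 1), W i ω := by
      ext ω; rw [Finset.sum_range_succ]; ring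
    rwa [e1, e2] at h4

end helpers2

/-- Finite Jensen for log: average of logs ≤ log of average. -/
lemma iwae_avg_log_le_log_avg {n : ℕ} (hn : 0 < n) (T : ℕ → ℝ)
    (hT : ∀ j ∈ range n, 0 < T j) :
    (∑ j ∈ range n, Real.log (T j)) / n ≤ Real.log ((∑ j ∈ range n, T j) / n) := by
  have hn' : (0:ℝ) < n := by exact_mod_cast hn
  have hw : ∀ j ∈ range n, (0:ℝ) ≤ 1 / n := fun j _ => by positivity
  have hw' : ∑ j ∈ range n, (1:ℝ) / n = 1 := by
    rw [Finset.sum_const, card_range, nsmul_eq_mul]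
    field_simp
  have hz : ∀ j ∈ range n, (0:ℝ) ≤ T j := fun j hj => (hT j hj).le
  have hgm := Real.geom_mean_le_arith_mean_weighted (range n) (fun _ => 1 / n) T hw hw' hz
  have hprodpos : 0 < ∏ j ∈ range n, T j ^ ((1:ℝ) / n) := by
    apply Finset.prod_pos
    intro j hj
    exact Real.rpow_pos_of_pos (hT j hj) _
  have hlog := Real.log_le_log hprodpos hgm
  have e1 : Real.log (∏ j ∈ range n, T j ^ ((1:ℝ) / n))
      = ∑ j ∈ range n, (1 / n) * Real.log (T j) := by
    rw [Real.log_prod (fun j hj => ne_of_gt (Real.rpow_pos_of_pos (hT j hj) _))]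
    exact Finset.sum_congr rfl fun j hj => Real.log_rpow (hT j hj) _
  rw [e1] at hlog
  have e2 : ∑ j ∈ range n, (1:ℝ) / n * Real.log (T j)
      = (∑ j ∈ range n, Real.log (T j)) / n := by
    rw [Finset.sum_div]
    exact Finset.sum_congr rfl fun j _ => by ring
  have e3 : ∑ j ∈ range n, (1:ℝ) / n * T j = (∑ j ∈ range n, T j) / n := by
    rw [Finset.sum_div]
    exact Finset.sum_congr rfl fun j _ => by ring
  rw [e2, e3] at hlog
  exact hlog

section helpers3
variable {Ω : Type*} {mΩ : MeasurableSpace Ω} {P : Measure Ω} [IsProbabilityMeasure P]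

/-- Integral Jensen for log via the tangent-line trick. -/
lemma iwae_integral_log_le {X : Ω → ℝ} (hX : Integrable X P)
    (hlog : Integrable (fun ω => Real.log (X ω)) P)
    (hpos : ∀ᵐ ω ∂P, 0 < X ω) :
    ∫ ω, Real.log (X ω) ∂P ≤ Real.log (∫ ω, X ω ∂P) := by
  set m := ∫ ω, X ω ∂P with hm
  have hmpos : 0 < m := by
    rw [hm, integral_pos_iff_support_of_nonneg_ae (hpos.mono fun ω h => h.le) hX]
    have : (Function.support X : Set Ω) =ᵐ[P] (Set.univ : Set Ω) := by
      filter_upwards [hpos] with ω h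
      show (X ω ≠ 0) = True
      simp [ne_of_gt h]
    rw [measure_congr this]
    simp
  have hptwise : ∀ᵐ ω ∂P, Real.log (X ω) ≤ Real.log m + X ω / m - 1 := by
    filter_upwards [hpos] with ω h
    have h1 : Real.log (X ω / m) ≤ X ω / m - 1 :=
      Real.log_le_sub_one_of_pos (div_pos h hmpos)
    rw [Real.log_div (ne_of_gt h) (ne_of_gt hmpos)] at h1
    linarith
  have hrhs : Integrable (fun ω => Real.log m + X ω / m - 1) P := by
    exact (((integrable_const (Real.log m)).add (hX.div_const m)).sub (integrable_const 1))
  have := integral_mono_ae hlog hrhs hptwise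
  calc ∫ ω, Real.log (X ω) ∂P ≤ ∫ ω, (Real.log m + X ω / m - 1) ∂P := this
    _ = Real.log m := by
        have e : ∫ ω, (Real.log m + X ω / m - 1) ∂P
            = (∫ ω, (Real.log m + X ω / m) ∂P) - ∫ _ω, (1:ℝ) ∂P :=
          integral_sub ((integrable_const (Real.log m)).add (hX.div_const m)) (integrable_const 1)
        rw [e, integral_add (integrable_const (Real.log m)) (hX.div_const m),
          integral_const, integral_const, integral_div, ← hm]
        simp [div_self (ne_of_gt hmpos)]
  
end helpers3


/-- **Monotone tightening of the IWAE bound.**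
Let `w₁, w₂, …` be i.i.d. strictly positive integrable real random variables such
that `log((w₁ + ⋯ + w_K)/K)` is integrable for every `K ≥ 1`.  With
`L_K := E[log((w₁ + ⋯ + w_K)/K)]`, one has `L_K ≤ L_{K+1}` for every `K ≥ 1` and
`L_K ≤ log E[w₁]` for every `K ≥ 1`. -/
theorem iwae_bound_monotone
    {Ω : Type*} {mΩ : MeasurableSpace Ω} (P : Measure Ω) [IsProbabilityMeasure P]
    (w : ℕ → Ω → ℝ)
    (hindep : iIndepFun w P)
    (hident : ∀ i : ℕ, IdentDistrib (w i) (w 0) P P)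
    (hpos : ∀ i : ℕ, ∀ ω, 0 < w i ω)
    (hint : Integrable (w 0) P)
    (hlogint : ∀ K : ℕ, 1 ≤ K →
      Integrable (fun ω => Real.log ((∑ k ∈ range K, w k ω) / K)) P)
    (L : ℕ → ℝ)
    (hL : ∀ K : ℕ, L K = ∫ ω, Real.log ((∑ k ∈ range K, w k ω) / K) ∂P) :
    (∀ K : ℕ, 1 ≤ K → L K ≤ L (K + 1)) ∧
    (∀ K : ℕ, 1 ≤ K → L K ≤ Real.log (∫ ω, w 0 ω ∂P)) := by
  classical
  -- measurable modifications
  set W : ℕ → Ω → ℝ := fun i => (hident i).aemeasurable_fst.mk (w i) with hWdef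
  have hWmeas : ∀ i, Measurable (W i) := fun i => (hident i).aemeasurable_fst.measurable_mk
  have hWae : ∀ i, w i =ᵐ[P] W i := fun i => (hident i).aemeasurable_fst.ae_eq_mk
  have hWindep := iwae_iIndepFun_congr hindep hWae
  have hWident : ∀ i, IdentDistrib (W i) (W 0) P P := fun i =>
    (((IdentDistrib.of_ae_eq (hident i).aemeasurable_fst (hWae i)).symm.trans (hident i)).trans
      (IdentDistrib.of_ae_eq (hident 0).aemeasurable_fst (hWae 0)))
  have hWpos : ∀ᵐ ω ∂P, ∀ i, 0 < W i ω := by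
    rw [ae_all_iff]
    intro i
    filter_upwards [hWae i] with ω h
    rw [← h]; exact hpos i ω
  have hsum_ae : ∀ n : ℕ,
      (fun ω => ∑ i ∈ range n, w i ω) =ᵐ[P] (fun ω => ∑ i ∈ range n, W i ω) := by
    intro n
    filter_upwards [ae_all_iff.2 hWae] with ω h
    exact Finset.sum_congr rfl fun i _ => h i
  have hlog_ae : ∀ n : ℕ,
      (fun ω => Real.log ((∑ k ∈ range n, w k ω) / n))
        =ᵐ[P] (fun ω => Real.log ((∑ k ∈ range n, W k ω) / n)) := by
    intro n
    filter_upwards [hsum_ae n] with ω h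
    rw [h]
  have hLW : ∀ n : ℕ, L n = ∫ ω, Real.log ((∑ k ∈ range n, W k ω) / n) ∂P :=
    fun n => (hL n).trans (integral_congr_ae (hlog_ae n))
  have hlogintW : ∀ K : ℕ, 1 ≤ K →
      Integrable (fun ω => Real.log ((∑ k ∈ range K, W k ω) / K)) P :=
    fun K hK => (hlogint K hK).congr (hlog_ae K)
  have hkey : ∀ (K : ℕ) (s : Finset ℕ), s.card = K →
      IdentDistrib (fun ω => Real.log ((∑ i ∈ s, W i ω) / K))
        (fun ω => Real.log ((∑ i ∈ range K, W i ω) / K)) P P := by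
    intro K s hs
    have h1 := iwae_sum_identDistrib hWindep hWmeas hWident s
    rw [hs] at h1
    exact h1.comp (Real.measurable_log.comp (measurable_id.div_const (K : ℝ)))
  constructor
  · -- monotonicity
    intro K hK
    have hK1 : (1:ℕ) ≤ K + 1 := by omega
    have hcard : ∀ j ∈ range (K + 1), (range (K + 1) \ {j}).card = K := by
      intro j hj
      rw [Finset.card_sdiff_of_subset (Finset.singleton_subset_iff.2 hj), Finset.card_singleton,
        card_range]
      omega
    have hTid : ∀ j ∈ range (K + 1),
        IdentDistrib (fun ω => Real.log ((∑ i ∈ range (K + 1) \ {j}, W i ω) / K))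
          (fun ω => Real.log ((∑ i ∈ range K, W i ω) / K)) P P :=
      fun j hj => hkey K _ (hcard j hj)
    have hTint : ∀ j ∈ range (K + 1),
        Integrable (fun ω => Real.log ((∑ i ∈ range (K + 1) \ {j}, W i ω) / K)) P :=
      fun j hj => ((hTid j hj).integrable_iff).2 (hlogintW K hK)
    have hTint_eq : ∀ j ∈ range (K + 1),
        ∫ ω, Real.log ((∑ i ∈ range (K + 1) \ {j}, W i ω) / K) ∂P = L K :=
      fun j hj => ((hTid j hj).integral_eq).trans (hLW K).symm
    have hpt : ∀ᵐ ω ∂P,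
        (∑ j ∈ range (K + 1), Real.log ((∑ i ∈ range (K + 1) \ {j}, W i ω) / K)) / (↑(K + 1))
          ≤ Real.log ((∑ k ∈ range (K + 1), W k ω) / (↑(K + 1))) := by
      filter_upwards [hWpos] with ω hω
      have hKpos : (0:ℝ) < K := by exact_mod_cast hK
      have hTpos : ∀ j ∈ range (K + 1), 0 < (∑ i ∈ range (K + 1) \ {j}, W i ω) / K := by
        intro j hj
        refine div_pos (Finset.sum_pos (fun i _ => hω i) ?_) hKpos
        rw [← Finset.card_pos, hcard j hj]; omega
      have h := iwae_avg_log_le_log_avg (show 0 < K + 1 by omega)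
        (fun j => (∑ i ∈ range (K + 1) \ {j}, W i ω) / K) hTpos
      have hsum_eq : ∑ j ∈ range (K + 1), (∑ i ∈ range (K + 1) \ {j}, W i ω) / (K:ℝ)
          = ∑ k ∈ range (K + 1), W k ω := by
        rw [← Finset.sum_div]
        have e : ∀ j ∈ range (K + 1), ∑ i ∈ range (K + 1) \ {j}, W i ω
            = (∑ k ∈ range (K + 1), W k ω) - W j ω := by
          intro j hj
          rw [Finset.sum_sdiff_eq_sub (Finset.singleton_subset_iff.2 hj), Finset.sum_singleton]
        rw [Finset.sum_congr rfl e, Finset.sum_sub_distrib, Finset.sum_const, card_range,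
          nsmul_eq_mul]
        push_cast
        field_simp
        ring
      rwa [hsum_eq] at h
    have hSint : Integrable (fun ω =>
        (∑ j ∈ range (K + 1), Real.log ((∑ i ∈ range (K + 1) \ {j}, W i ω) / K))
          / (↑(K + 1) : ℝ)) P :=
      (integrable_finset_sum _ hTint).div_const _
    have hmain := integral_mono_ae hSint (hlogintW (K + 1) hK1) hpt
    rw [hLW (K + 1)]
    refine le_trans (le_of_eq ?_) hmain
    rw [integral_div, integral_finset_sum _ hTint, Finset.sum_congr rfl hTint_eq,
      Finset.sum_const, card_range, nsmul_eq_mul,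
      mul_div_cancel_left₀ _ (Nat.cast_ne_zero.2 (show K + 1 ≠ 0 by omega))]
  · -- bound by log of the mean
    intro K hK
    have hwint : ∀ i, Integrable (w i) P := fun i => (hident i).integrable_iff.2 hint
    have hXint : Integrable (fun ω => (∑ i ∈ range K, w i ω) / (K:ℝ)) P :=
      (integrable_finset_sum _ (fun i _ => hwint i)).div_const _
    have hXpos : ∀ᵐ ω ∂P, 0 < (∑ i ∈ range K, w i ω) / (K:ℝ) := by
      refine Filter.Eventually.of_forall fun ω => div_pos ?_ (by exact_mod_cast hK)
      exact Finset.sum_pos (fun i _ => hpos i ω) (by rw [← Finset.card_pos, card_range]; omega)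
    have h := iwae_integral_log_le hXint (hlogint K hK) hXpos
    have hmean : ∫ ω, (∑ i ∈ range K, w i ω) / (K:ℝ) ∂P = ∫ ω, w 0 ω ∂P := by
      rw [integral_div, integral_finset_sum _ (fun i _ => hwint i),
        Finset.sum_congr rfl (fun i _ => (hident i).integral_eq), Finset.sum_const, card_range,
        nsmul_eq_mul, mul_div_cancel_left₀ _ (Nat.cast_ne_zero.2 (show K ≠ 0 by omega))]
    rw [hL K]
    rw [hmean] at h
    exact h
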